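/- Let s ≥ 1 be an integer and let α_v = (-1)^{v+1} (s!)^2 / (v (s+v)! (s-v)!) for v = 1,…,s. Then for every integer j with 1 ≤ j ≤ 2s−1, Σ_{v=1}^{s} α_v Σ_{w=0}^{v−1} ( w^j + (w−v)^j ) = β_j. -/

import Mathlib

open Finset Polynomial

lemma findiff : ∀ n : ℕ, ∀ p : Polynomial ℝ, p.degree < (n : ℕ) →
    ∑ j ∈ Finset.range (n+1), (-1:ℝ)^j * (n.choose j) * p.eval (j : ℝ) = 0 := by
  intro n
  induction n with
  | zero =>
    intro p hp
    have hp0 : p = 0 := by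
      rw [← Polynomial.degree_eq_bot]
      exact Nat.WithBot.lt_zero_iff.mp (by exact_mod_cast hp)
    simp [hp0]
  | succ n ih =>
    intro p hp
    by_cases hp0 : p = 0
    · simp [hp0]
    · set q : Polynomial ℝ := p.comp (X + 1) with hqdef
      have hXd : (X + 1 : ℝ[X]).natDegree = 1 := by
        simpa using Polynomial.natDegree_X_add_C (1:ℝ)
      have hlc : q.leadingCoeff = p.leadingCoeff := by
        rw [hqdef, Polynomial.leadingCoeff_comp (by rw [hXd]; exact one_ne_zero)]
        have : (X + 1 : ℝ[X]).leadingCoeff = 1 := by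
          have := Polynomial.monic_X_add_C (1:ℝ)
          exact this
        rw [this]; simp
      have hdeg : p.degree = q.degree := by
        have hq0 : q ≠ 0 := by
          intro h
          apply hp0
          apply Polynomial.leadingCoeff_eq_zero.mp
          rw [← hlc, h, Polynomial.leadingCoeff_zero]
        rw [Polynomial.degree_eq_natDegree hp0, Polynomial.degree_eq_natDegree hq0,
          hqdef, Polynomial.natDegree_comp, hXd, mul_one]
      have hdlt : (p - q).degree < p.degree :=
        Polynomial.degree_sub_lt hdeg hp0 hlc.symm
      have hnd : p.natDegree < n + 1 := (Polynomial.natDegree_lt_iff_degree_lt hp0).mpr hp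
      have hdn : (p - q).degree < (n : ℕ) := by
        calc (p - q).degree < p.degree := hdlt
        _ = (p.natDegree : WithBot ℕ) := Polynomial.degree_eq_natDegree hp0
        _ ≤ (n : ℕ) := by exact_mod_cast Nat.lt_succ_iff.mp hnd
      have heval : ∀ j : ℕ, (p - q).eval (j : ℝ) = p.eval (j : ℝ) - p.eval ((j : ℝ) + 1) := by
        intro j
        simp [hqdef, Polynomial.eval_comp]
      have key : ∑ j ∈ Finset.range (n+2), (-1:ℝ)^j * ((n+1).choose j) * p.eval (j : ℝ)
          = ∑ j ∈ Finset.range (n+1), (-1:ℝ)^j * (n.choose j) * (p - q).eval (j : ℝ) := by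
        rw [Finset.sum_range_succ' (fun j => (-1:ℝ)^j * ((n+1).choose j) * p.eval (j : ℝ)) (n+1)]
        have h1 : ∀ i : ℕ, (-1:ℝ)^(i+1) * ((n+1).choose (i+1)) * p.eval ((i+1 : ℕ) : ℝ)
            = (-(-1:ℝ)^i * (n.choose i)) * p.eval ((i:ℝ) + 1)
              + (-1:ℝ)^(i+1) * (n.choose (i+1)) * p.eval (((i+1 : ℕ)) : ℝ) := by
          intro i
          rw [Nat.choose_succ_succ]
          push_cast
          ring
        rw [Finset.sum_congr rfl (fun i _ => h1 i), Finset.sum_add_distrib]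
        have h2 : ∑ i ∈ Finset.range (n+1), (-1:ℝ)^(i+1) * (n.choose (i+1)) * p.eval (((i+1:ℕ)) : ℝ)
            + (-1:ℝ)^(0:ℕ) * ((n+1).choose 0) * p.eval ((0:ℕ) : ℝ)
            = ∑ j ∈ Finset.range (n+1), (-1:ℝ)^j * (n.choose j) * p.eval (j : ℝ) := by
          have := Finset.sum_range_succ' (fun j => (-1:ℝ)^j * (n.choose j) * p.eval (j : ℝ)) (n+1)
          rw [Finset.sum_range_succ] at this
          simp only [Nat.choose_succ_self, Nat.cast_zero, Nat.cast_ofNat] at this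
          simp only [Nat.choose_zero_right, Nat.cast_one, pow_zero, one_mul, Nat.cast_zero] at this ⊢
          rw [← this]
          simp
        rw [add_assoc, h2, ← Finset.sum_add_distrib]
        apply Finset.sum_congr rfl
        intro i _
        rw [heval]
        push_cast
        ring
      rw [key]
      exact ih (p - q) hdn

lemma aux_sym (s k : ℕ) (hk : Even k) (hk2 : k < 2*s) :
    ∑ j ∈ Finset.range s, (-1:ℝ)^j * ((2*s).choose j) * ((j:ℝ) - s)^k
      = -((-1:ℝ)^s * ((2*s).choose s) * (0:ℝ)^k) / 2 := by
  set f : ℕ → ℝ := fun j => (-1:ℝ)^j * ((2*s).choose j) * ((j:ℝ) - s)^k with hf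
  have hU : ∑ j ∈ Finset.range (2*s+1), f j = 0 := by
    have hdeg : ((X - C (s:ℝ))^k).degree < ((2*s : ℕ) : WithBot ℕ) := by
      rw [Polynomial.degree_pow, Polynomial.degree_X_sub_C]
      rw [nsmul_eq_mul, mul_one]
      exact_mod_cast hk2
    have := findiff (2*s) ((X - C (s:ℝ))^k) hdeg
    simpa [hf] using this
  have hsplit : ∑ j ∈ Finset.range (2*s+1), f j
      = (∑ j ∈ Finset.range s, f j + f s) + ∑ j ∈ Finset.Ico (s+1) (2*s+1), f j := by
    rw [← Finset.sum_range_succ]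
    rw [Finset.range_eq_Ico, Finset.range_eq_Ico]
    exact (Finset.sum_Ico_consecutive f (m := 0) (n := s+1) (k := 2*s+1) (by omega) (by omega)).symm
  have htail : ∑ j ∈ Finset.Ico (s+1) (2*s+1), f j = ∑ j ∈ Finset.range s, f j := by
    apply Finset.sum_nbij' (fun j => 2*s - j) (fun j => 2*s - j)
    · intro a ha
      simp only [Finset.mem_Ico] at ha
      simp only [Finset.mem_range]
      omega
    · intro a ha
      simp only [Finset.mem_range] at ha
      simp only [Finset.mem_Ico]
      omega
    · intro a ha; simp only [Finset.mem_Ico] at ha; omega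
    · intro a ha; simp only [Finset.mem_range] at ha; omega
    · intro a ha
      simp only [Finset.mem_Ico] at ha
      have h1 : a ≤ 2*s := by omega
      have hc : (2*s).choose (2*s - a) = (2*s).choose a := Nat.choose_symm h1
      have hcast : ((2*s - a : ℕ) : ℝ) = 2*s - a := by push_cast [Nat.cast_sub h1]; ring
      have hsgn : (-1:ℝ)^(2*s - a) = (-1:ℝ)^a := by
        have : (-1:ℝ)^(2*s - a) * (-1:ℝ)^a = (-1:ℝ)^(2*s) := by
          rw [← pow_add]; congr 1; omega
        have h2 : (-1:ℝ)^(2*s) = 1 := by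
          rw [pow_mul]; norm_num
        have ha2 : (-1:ℝ)^a * (-1:ℝ)^a = 1 := by
          rw [← pow_add, ← two_mul, pow_mul]; norm_num
        calc (-1:ℝ)^(2*s - a) = (-1:ℝ)^(2*s - a) * ((-1:ℝ)^a * (-1:ℝ)^a) := by
              rw [ha2, mul_one]
          _ = ((-1:ℝ)^(2*s - a) * (-1:ℝ)^a) * (-1:ℝ)^a := by ring
          _ = (-1:ℝ)^a := by rw [this, h2, one_mul]
      have hpow : (((2*s - a : ℕ) : ℝ) - s)^k = ((a:ℝ) - s)^k := by
        rw [hcast]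
        have : (2*(s:ℝ) - a - s) = -((a:ℝ) - s) := by ring
        rw [this, hk.neg_pow]
      simp only [hf, hc, hsgn, hpow]
  rw [hsplit, htail] at hU
  have hfs : f s = (-1:ℝ)^s * ((2*s).choose s) * (0:ℝ)^k := by
    simp [hf]
  rw [hfs] at hU
  linarith

lemma moment (s : ℕ) (hs : 1 ≤ s) (α : ℕ → ℝ)
    (hα : ∀ v : ℕ, α v = (-1 : ℝ) ^ (v + 1) * (Nat.factorial s : ℝ) ^ 2 /
      ((v : ℝ) * (Nat.factorial (s + v) : ℝ) * (Nat.factorial (s - v) : ℝ)))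
    (k : ℕ) (hk : Even k) (hk2 : k < 2*s) :
    ∑ v ∈ Finset.Icc 1 s, α v * (v:ℝ)^(k+1) = (0:ℝ)^k / 2 := by
  set f : ℕ → ℝ := fun j => (-1:ℝ)^j * ((2*s).choose j) * ((j:ℝ) - s)^k with hf
  set c : ℝ := -(-1:ℝ)^s * ((Nat.factorial s : ℝ)^2 / (Nat.factorial (2*s) : ℝ)) with hc
  have hfac2s : (Nat.factorial (2*s) : ℝ) ≠ 0 := by
    exact_mod_cast Nat.factorial_ne_zero (2*s)
  have step1 : ∀ v ∈ Finset.Icc 1 s, α v * (v:ℝ)^(k+1) = c * f (s - v) := by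
    intro v hv
    simp only [Finset.mem_Icc] at hv
    obtain ⟨hv1, hv2⟩ := hv
    have hvR : (v:ℝ) ≠ 0 := by positivity
    have hfp : (Nat.factorial (s+v) : ℝ) ≠ 0 := by
      exact_mod_cast Nat.factorial_ne_zero (s+v)
    have hfm : (Nat.factorial (s-v) : ℝ) ≠ 0 := by
      exact_mod_cast Nat.factorial_ne_zero (s-v)
    have hchoose : ((2*s).choose (s-v) : ℝ) * (Nat.factorial (s-v) : ℝ)
        * (Nat.factorial (s+v) : ℝ) = (Nat.factorial (2*s) : ℝ) := by
      have h := Nat.choose_mul_factorial_mul_factorial (n := 2*s) (k := s - v) (by omega)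
      have h2 : 2*s - (s - v) = s + v := by omega
      rw [h2] at h
      exact_mod_cast h
    -- signs
    have hsgn : (-1:ℝ)^(s - v) = (-1:ℝ)^s * (-1:ℝ)^v := by
      have h1 : (-1:ℝ)^(s - v + 2*v) = (-1:ℝ)^(s + v) := by congr 1; omega
      have h2 : (-1:ℝ)^(s - v + 2*v) = (-1:ℝ)^(s-v) * ((-1:ℝ)^2)^v := by
        rw [pow_add, pow_mul]
      simp only [neg_one_sq, one_pow, mul_one] at h2
      rw [← h2, h1, pow_add]
    have hcast : ((s - v : ℕ) : ℝ) = (s:ℝ) - v := by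
      push_cast [Nat.cast_sub hv2]; ring
    have hpow : (((s - v : ℕ) : ℝ) - s)^k = (v:ℝ)^k := by
      rw [hcast]
      have : ((s:ℝ) - v - s) = -(v:ℝ) := by ring
      rw [this, hk.neg_pow]
    rw [hα v, hf]
    simp only [hsgn, hpow]
    rw [hc]
    have hcc : ((2*s).choose (s-v) : ℝ) = (Nat.factorial (2*s) : ℝ)
        / ((Nat.factorial (s-v) : ℝ) * (Nat.factorial (s+v) : ℝ)) := by
      field_simp
      linarith [hchoose]
    rw [hcc]
    have hsq2 : (-1:ℝ)^s * (-1:ℝ)^s = 1 := by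
      rw [← pow_add, ← two_mul, pow_mul]; norm_num
    field_simp
    linear_combination ((-1:ℝ)^v * (Nat.factorial s:ℝ)^2 * (v:ℝ)^(k+1)
        * (Nat.factorial (2*s):ℝ) * (Nat.factorial (s-v):ℝ) * (Nat.factorial (s+v):ℝ)) * hsq2
        + ((v:ℝ)^(k+1) * (-1:ℝ)^v - (v:ℝ)^(k+1) * (Nat.factorial s:ℝ)^2 * (Nat.factorial (2*s):ℝ)
          * (Nat.factorial (s-v):ℝ) * (Nat.factorial (s+v):ℝ) * (-1:ℝ)^v) * hsq2
  rw [Finset.sum_congr rfl step1]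
  have step2 : ∑ v ∈ Finset.Icc 1 s, f (s - v) = ∑ j ∈ Finset.range s, f j := by
    apply Finset.sum_nbij' (fun v => s - v) (fun j => s - j)
    · intro a ha; simp only [Finset.mem_Icc] at ha; simp only [Finset.mem_range]; omega
    · intro a ha; simp only [Finset.mem_range] at ha; simp only [Finset.mem_Icc]; omega
    · intro a ha; simp only [Finset.mem_Icc] at ha; omega
    · intro a ha; simp only [Finset.mem_range] at ha; omega
    · intro a _; rfl
  rw [← Finset.mul_sum, step2, aux_sym s k hk hk2]
  have hchoose2 : ((2*s).choose s : ℝ) * (Nat.factorial s : ℝ) * (Nat.factorial s : ℝ)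
      = (Nat.factorial (2*s) : ℝ) := by
    have h := Nat.choose_mul_factorial_mul_factorial (n := 2*s) (k := s) (by omega)
    have h2 : 2*s - s = s := by omega
    rw [h2] at h
    exact_mod_cast h
  rw [hc]
  have hsq : (-1:ℝ)^s * (-1:ℝ)^s = 1 := by
    rw [← pow_add, ← two_mul, pow_mul]; norm_num
  field_simp
  linear_combination (2*(0:ℝ)^k * (Nat.factorial s:ℝ)^2 * (((2*s).choose s : ℕ):ℝ)) * hsq
    + 2*(0:ℝ)^k * hchoose2
    - (0:ℝ)^k * (Nat.factorial s:ℝ)^2 * (((2*s).choose s : ℕ):ℝ) * hsq - (0:ℝ)^k * hchoose2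

lemma inner_reflect (v j : ℕ) (hj : 1 ≤ j) :
    ∑ w ∈ Finset.range v, ((w:ℝ) - (v:ℝ))^j
      = (-1:ℝ)^j * (∑ w ∈ Finset.range v, (w:ℝ)^j + (v:ℝ)^j) := by
  rcases Nat.eq_zero_or_pos v with hv | hv
  · subst hv; simp [zero_pow (by omega : j ≠ 0)]
  have h1 : ∀ w ∈ Finset.range v, ((w:ℝ) - (v:ℝ))^j = (-1:ℝ)^j * ((v:ℝ) - (w:ℝ))^j := by
    intro w _
    rw [← neg_sub, neg_pow]
  rw [Finset.sum_congr rfl h1, ← Finset.mul_sum]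
  congr 1
  have h2 : ∑ w ∈ Finset.range v, ((v:ℝ) - (w:ℝ))^j
      = ∑ w ∈ Finset.range v, ((w:ℝ) + 1)^j := by
    rw [← Finset.sum_range_reflect (fun w => ((w:ℝ) + 1)^j) v]
    apply Finset.sum_congr rfl
    intro w hw
    simp only [Finset.mem_range] at hw
    have : ((v - 1 - w : ℕ) : ℝ) = (v:ℝ) - 1 - w := by
      have h3 : 1 + w ≤ v := by omega
      push_cast [Nat.cast_sub (by omega : 1 ≤ v), Nat.cast_sub (by omega : w ≤ v - 1)]
      ring
    rw [this]
    ring_nf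
  rw [h2]
  have h4 := Finset.sum_range_succ' (fun w => (w:ℝ)^j) v
  have h5 := Finset.sum_range_succ (fun w => (w:ℝ)^j) v
  rw [h5] at h4
  push_cast at h4 ⊢
  rw [zero_pow (by omega : j ≠ 0), add_zero] at h4
  linarith [h4]

/-- for the centered-difference coefficients `α v` of order `2s`,
`∑_{v=1}^s α v ∑_{w=0}^{v-1} (w^j + (w−v)^j) = β_j` for every `1 ≤ j ≤ 2s−1`,
where `β_j` is the `j`-th Bernoulli number (with `β_1 = −1/2`). -/
theorem alpha_bernoulli_identity (s : ℕ) (hs : 1 ≤ s) (α : ℕ → ℝ)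
    (hα : ∀ v : ℕ, α v = (-1 : ℝ) ^ (v + 1) * (Nat.factorial s : ℝ) ^ 2 /
      ((v : ℝ) * (Nat.factorial (s + v) : ℝ) * (Nat.factorial (s - v) : ℝ))) :
    ∀ j : ℕ, 1 ≤ j → j ≤ 2 * s - 1 →
      ∑ v ∈ Finset.Icc 1 s, α v *
          ∑ w ∈ Finset.range v, ((w : ℝ) ^ j + ((w : ℝ) - (v : ℝ)) ^ j) =
        (bernoulli j : ℝ) := by
  intro j hj1 hj2
  rcases Nat.even_or_odd j with hje | hjo
  · -- even case
    have hje2 := Nat.even_iff.mp hje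
    have hj2' : j + 2 ≤ 2 * s := by omega
    have hjge2 : 2 ≤ j := by omega
    set M : ℕ → ℝ := fun m => ∑ v ∈ Finset.Icc 1 s, α v * (v:ℝ)^m with hMdef
    have hjR : ((j:ℝ) + 1) ≠ 0 := by positivity
    have hM1 : M 1 = 1/2 := by
      have := moment s hs α hα 0 Even.zero (by omega)
      simpa [hMdef] using this
    -- Faulhaber
    have hF : ∀ v : ℕ, ∑ w ∈ Finset.range v, (w:ℝ)^j
        = ∑ i ∈ Finset.range (j+1),
            (bernoulli i : ℝ) * (((j+1).choose i : ℕ):ℝ) * (v:ℝ)^(j+1-i) / ((j:ℝ)+1) := by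
      intro v
      have h := sum_range_pow v j
      have h2 := congrArg (fun x : ℚ => (x : ℝ)) h
      push_cast at h2
      convert h2 using 2
    -- rewrite inner sums
    have hinner : ∀ v ∈ Finset.Icc 1 s,
        α v * ∑ w ∈ Finset.range v, ((w : ℝ) ^ j + ((w : ℝ) - (v : ℝ)) ^ j)
        = 2 * (α v * ∑ w ∈ Finset.range v, (w:ℝ)^j) + α v * (v:ℝ)^j := by
      intro v _
      rw [Finset.sum_add_distrib, inner_reflect v j hj1, hje.neg_one_pow]
      ring
    rw [Finset.sum_congr rfl hinner, Finset.sum_add_distrib]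
    have hswap : ∑ v ∈ Finset.Icc 1 s, 2 * (α v * ∑ w ∈ Finset.range v, (w:ℝ)^j)
        = ∑ i ∈ Finset.range (j+1),
            2 * ((bernoulli i : ℝ) * (((j+1).choose i : ℕ):ℝ) / ((j:ℝ)+1) * M (j+1-i)) := by
      have e1 : ∀ v ∈ Finset.Icc 1 s, 2 * (α v * ∑ w ∈ Finset.range v, (w:ℝ)^j)
          = ∑ i ∈ Finset.range (j+1),
              2 * (α v * ((bernoulli i : ℝ) * (((j+1).choose i : ℕ):ℝ) * (v:ℝ)^(j+1-i) / ((j:ℝ)+1))) := by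
        intro v _
        rw [hF v, Finset.mul_sum, Finset.mul_sum]
      rw [Finset.sum_congr rfl e1, Finset.sum_comm]
      apply Finset.sum_congr rfl
      intro i _
      rw [hMdef]
      simp only [Finset.mul_sum]
      apply Finset.sum_congr rfl
      intro v _
      ring
    rw [hswap]
    have hterm : ∀ i ∈ Finset.range (j+1),
        2 * ((bernoulli i : ℝ) * (((j+1).choose i : ℕ):ℝ) / ((j:ℝ)+1) * M (j+1-i))
        = (if i = 1 then -(M j) else 0) + (if i = j then (bernoulli j : ℝ) else 0) := by
      intro i hi
      simp only [Finset.mem_range] at hi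
      by_cases hi1 : i = 1
      · subst hi1
        have hne : (1:ℕ) ≠ j := by omega
        simp only [if_pos rfl, if_neg hne, add_zero]
        rw [Nat.choose_one_right]
        have hex : j + 1 - 1 = j := by omega
        rw [hex]
        have hb1 : ((bernoulli 1 : ℚ) : ℝ) = -1/2 := by
          rw [_root_.bernoulli_one]; norm_num
        rw [hb1]
        push_cast
        field_simp
      · by_cases hij : i = j
        · subst hij
          simp only [if_neg hi1, if_pos rfl, zero_add]
          rw [Nat.choose_succ_self_right]
          have hex : i + 1 - i = 1 := by omega
          rw [hex, hM1]
          push_cast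
          field_simp
        · simp only [if_neg hi1, if_neg hij, add_zero]
          rcases Nat.even_or_odd i with hie | hio
          · -- i even, i < j : M (j+1-i) = 0
            have hfe : Even (j - i) := by
              rw [Nat.even_iff] at *; omega
            have hlt : j - i < 2 * s := by omega
            have hone : 1 ≤ j - i := by omega
            have := moment s hs α hα (j - i) hfe hlt
            have hex : j + 1 - i = (j - i) + 1 := by omega
            rw [hex]
            have hMz : M (j - i + 1) = 0 := by
              rw [hMdef]
              simp only []
              rw [this, zero_pow (by omega : j - i ≠ 0)]
              norm_num
            rw [hMz]
            ring
          · -- i odd, i ≠ 1 : bernoulli i = 0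
            have hb : (bernoulli i : ℚ) = 0 := by
              rw [bernoulli_eq_bernoulli'_of_ne_one hi1]
              exact bernoulli'_eq_zero_of_odd hio (by
                rcases Nat.odd_iff.mp hio with h
                omega)
            rw [hb]
            norm_num
    rw [Finset.sum_congr rfl hterm, Finset.sum_add_distrib,
      Finset.sum_ite_eq' (Finset.range (j+1)) 1 (fun _ => -(M j)),
      Finset.sum_ite_eq' (Finset.range (j+1)) j (fun _ => (bernoulli j : ℝ))]
    rw [if_pos (by simp only [Finset.mem_range]; omega),
      if_pos (by simp only [Finset.mem_range]; omega)]
    show -(M j) + (bernoulli j : ℝ) + M j = _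
    ring
  · -- odd case
    have hjo2 := Nat.odd_iff.mp hjo
    have hinner : ∀ v ∈ Finset.Icc 1 s,
        α v * ∑ w ∈ Finset.range v, ((w : ℝ) ^ j + ((w : ℝ) - (v : ℝ)) ^ j)
        = -(α v * (v:ℝ)^j) := by
      intro v _
      rw [Finset.sum_add_distrib, inner_reflect v j hj1, hjo.neg_one_pow]
      ring
    rw [Finset.sum_congr rfl hinner]
    have hfe : Even (j - 1) := by rw [Nat.even_iff]; omega
    have hm := moment s hs α hα (j-1) hfe (by omega)
    rw [(by omega : j - 1 + 1 = j)] at hm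
    rw [Finset.sum_neg_distrib, hm]
    by_cases hj1' : j = 1
    · subst hj1'
      rw [_root_.bernoulli_one]
      norm_num
    · rw [zero_pow (by omega : j - 1 ≠ 0)]
      have hb : (bernoulli j : ℚ) = 0 := by
        rw [bernoulli_eq_bernoulli'_of_ne_one hj1']
        exact bernoulli'_eq_zero_of_odd hjo (by omega)
      rw [hb]
      norm_num
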